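/- For every non-negative integer v, the function φ̃_v(x) = e^{x²/2}·h̃_v(x) satisfies the Schrödinger equation −φ̃_v''(x) + (x² − 1)·φ̃_v(x) = −2(v+1)·φ̃_v(x) for all real x. -/

import Mathlib

open Polynomial

/-- Twisted Hermite polynomials `h̃_v(x) = i^{−v} H_v(ix)`:
`h̃₀ = 1`, `h̃_{v+1} = 2x·h̃_v + h̃_v'`. -/
noncomputable def hermiteTwist : ℕ → Polynomial ℝ
  | 0 => 1
  | v + 1 => 2 * X * hermiteTwist v + Polynomial.derivative (hermiteTwist v)

lemma hermiteTwist_deriv (v : ℕ) :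
    Polynomial.derivative (hermiteTwist (v + 1)) = C ((2 * (v + 1) : ℕ) : ℝ) * hermiteTwist v := by
  induction v with
  | zero =>
      norm_num [hermiteTwist, map_ofNat]
  | succ n ih =>
      have hdef : hermiteTwist (n + 1 + 1)
          = 2 * X * hermiteTwist (n + 1) + Polynomial.derivative (hermiteTwist (n + 1)) := rfl
      rw [hdef, derivative_add]
      simp only [derivative_mul, derivative_C, derivative_X, derivative_ofNat, ih,
        zero_mul, mul_one, zero_add, add_zero, mul_zero]
      have h2 : 2 * X * (C ((2 * (n + 1) : ℕ) : ℝ) * hermiteTwist n)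
          + C ((2 * (n + 1) : ℕ) : ℝ) * Polynomial.derivative (hermiteTwist n)
          = C ((2 * (n + 1) : ℕ) : ℝ) * hermiteTwist (n + 1) := by
        conv_rhs => rw [show hermiteTwist (n + 1)
          = 2 * X * hermiteTwist n + Polynomial.derivative (hermiteTwist n) from rfl]
        ring
      simp only [C_eq_natCast] at h2 ⊢
      push_cast at h2 ⊢
      linear_combination h2

lemma hermiteTwist_key (v : ℕ) :
    Polynomial.derivative (Polynomial.derivative (hermiteTwist v))
      + 2 * X * Polynomial.derivative (hermiteTwist v)
      = C ((2 * v : ℕ) : ℝ) * hermiteTwist v := by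
  cases v with
  | zero => simp [hermiteTwist]
  | succ n =>
      rw [hermiteTwist_deriv, derivative_mul, derivative_C]
      conv_rhs => rw [show hermiteTwist (n + 1)
        = 2 * X * hermiteTwist n + Polynomial.derivative (hermiteTwist n) from rfl]
      ring

lemma phi_hasDerivAt (p : Polynomial ℝ) (x : ℝ) :
    HasDerivAt (fun y => Real.exp (y ^ 2 / 2) * p.eval y)
      (Real.exp (x ^ 2 / 2) * ((X * p + Polynomial.derivative p).eval x)) x := by
  have h1 : HasDerivAt (fun y : ℝ => y ^ 2 / 2) x x := by
    have := (hasDerivAt_pow 2 x).div_const 2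
    simpa using this
  have h2 := h1.exp
  have h3 := p.hasDerivAt x
  have : HasDerivAt (fun y => Real.exp (y ^ 2 / 2) * p.eval y) _ x := h2.fun_mul h3
  convert this using 1
  simp
  ring

lemma phi_deriv (p : Polynomial ℝ) :
    deriv (fun y => Real.exp (y ^ 2 / 2) * p.eval y)
      = fun x => Real.exp (x ^ 2 / 2) * ((X * p + Polynomial.derivative p).eval x) :=
  funext fun x => (phi_hasDerivAt p x).deriv

/-- the pseudo virtual state wavefunctions
`φ̃_v(x) = e^{x²/2}·h̃_v(x)` of the harmonic oscillator satisfy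
`−φ̃_v'' + (x² − 1)·φ̃_v = −2(v+1)·φ̃_v`. -/
theorem harmonic_pseudo_virtual_state (v : ℕ) :
    ∀ x : ℝ,
      -(deriv (deriv (fun y => Real.exp (y ^ 2 / 2) * (hermiteTwist v).eval y)) x)
        + (x ^ 2 - 1) * (Real.exp (x ^ 2 / 2) * (hermiteTwist v).eval x)
      = -2 * (v + 1) * (Real.exp (x ^ 2 / 2) * (hermiteTwist v).eval x) := by
  intro x
  set p := hermiteTwist v with hp
  rw [phi_deriv p, phi_deriv (X * p + Polynomial.derivative p)]
  have hkey := congrArg (Polynomial.eval x) (hermiteTwist_key v)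
  rw [← hp] at hkey
  simp only [eval_add, eval_mul, eval_X, eval_C, eval_ofNat, derivative_add, derivative_mul,
    derivative_X, one_mul, Nat.cast_mul, Nat.cast_ofNat] at hkey ⊢

  nlinarith [Real.exp_pos (x ^ 2 / 2), hkey,
    mul_self_nonneg (Real.exp (x ^ 2 / 2))]
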